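/- Suppose a nonnegative sequence e(t) satisfies e(t+1) ≤ (1 - 2g(t)/A)·e(t) + (C/A)·g(t)², where g : ℕ → ℝ is positive, nonincreasing, g(t) ≤ A/2, (1 - g(t)/A)·g(t) ≤ g(t+1), and e(0) ≤ C·g(0). Then e(t) ≤ C·g(t) for all t ∈ ℕ. -/
import Mathlib

theorem stmt_9 (e g : ℕ → ℝ) (A C : ℝ) (hA : 0 < A)
    (he : ∀ t, 0 ≤ e t) (hgpos : ∀ t, 0 < g t)
    (hmono : ∀ t, g (t + 1) ≤ g t) (hgA : ∀ t, g t ≤ A / 2)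
    (hglow : ∀ t, (1 - g t / A) * g t ≤ g (t + 1))
    (hrec : ∀ t, e (t + 1) ≤ (1 - 2 * g t / A) * e t + (C / A) * (g t) ^ 2)
    (h0 : e 0 ≤ C * g 0) :
    ∀ t, e t ≤ C * g t := by
  have hC : 0 ≤ C := nonneg_of_mul_nonneg_right (le_trans (he 0) (h0.trans_eq (mul_comm C (g 0)))) (hgpos 0)
  intro t
  induction t with
  | zero => exact h0
  | succ t ih =>
    have hfac : 0 ≤ 1 - 2 * g t / A := by
      have := hgA t
      rw [sub_nonneg, div_le_one hA]
      linarith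
    calc e (t + 1) ≤ (1 - 2 * g t / A) * e t + (C / A) * (g t) ^ 2 := hrec t
      _ ≤ (1 - 2 * g t / A) * (C * g t) + (C / A) * (g t) ^ 2 :=
          by gcongr
      _ = C * ((1 - g t / A) * g t) := by field_simp; ring
      _ ≤ C * g (t + 1) := by
          exact mul_le_mul_of_nonneg_left (hglow t) hC
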